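/- Let V be a finite Gödel set. Then the quantifier-shift schemas (B ⊃ ∃x A(x)) ⊃ ∃x(B ⊃ A(x)) and (∀x A(x) ⊃ B) ⊃ ∃x(A(x) ⊃ B) (x not free in B), as well as all remaining classical quantifier-shift schemas, are valid in G_V, and consequently every L-sentence has a logically equivalent prenex L-sentence in G_V. -/
import Mathlib


namespace GodelPaper

/-- A first-order language: function and relation symbols of each arity. -/
structure Lang where
  Func : ℕ → Type
  Rel : ℕ → Type

/-- A Gödel set: a closed subset of [0,1] containing 0 and 1. -/
def GodelSet (V : Set ℝ) : Prop :=
  IsClosed V ∧ V ⊆ Set.Icc 0 1 ∧ (0:ℝ) ∈ V ∧ (1:ℝ) ∈ V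

/-- Terms with variables from `α`. -/
inductive Term (L : Lang) (α : Type) : Type
  | var : α → Term L α
  | func : ∀ {k}, L.Func k → (Fin k → Term L α) → Term L α

/-- A `V`-interpretation: nonempty domain, interpretation of function symbols,
and truth values in `V` for atomic sentences with parameters. -/
structure Interp (L : Lang) (V : Set ℝ) where
  Dom : Type
  dom_nonempty : Nonempty Dom
  funMap : ∀ {k}, L.Func k → (Fin k → Dom) → Dom
  relVal : ∀ {k}, L.Rel k → (Fin k → Dom) → ℝ
  relVal_mem : ∀ {k} (R : L.Rel k) (v : Fin k → Dom), relVal R v ∈ V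

def Term.eval {L : Lang} {V : Set ℝ} (I : Interp L V) {α : Type} (v : α → I.Dom) :
    Term L α → I.Dom
  | .var i => v i
  | .func f ts => I.funMap f fun j => Term.eval I v (ts j)

/-- Formulas of the Δ-extended language, with free variables among `Fin n`.
The quantifiers bind the *last* variable. Δ-free formulas (i.e. formulas of the
plain language) are singled out by the predicate `DeltaFree` below. -/
inductive Form (L : Lang) : ℕ → Type
  | falsum : ∀ {n}, Form L n
  | atom : ∀ {n k}, L.Rel k → (Fin k → Term L (Fin n)) → Form L n
  | conj : ∀ {n}, Form L n → Form L n → Form L n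
  | disj : ∀ {n}, Form L n → Form L n → Form L n
  | impl : ∀ {n}, Form L n → Form L n → Form L n
  | delta : ∀ {n}, Form L n → Form L n
  | all : ∀ {n}, Form L (n+1) → Form L n
  | ex : ∀ {n}, Form L (n+1) → Form L n

/-- The Gödel truth value of a formula under an interpretation and an
assignment of the free variables. -/
noncomputable def Form.val {L : Lang} {V : Set ℝ} (I : Interp L V) :
    ∀ {n}, Form L n → (Fin n → I.Dom) → ℝ
  | _, .falsum, _ => 0
  | _, .atom R ts, ρ => I.relVal R fun j => Term.eval I ρ (ts j)
  | _, .conj A B, ρ => min (Form.val I A ρ) (Form.val I B ρ)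
  | _, .disj A B, ρ => max (Form.val I A ρ) (Form.val I B ρ)
  | _, .impl A B, ρ => if Form.val I A ρ ≤ Form.val I B ρ then 1 else Form.val I B ρ
  | _, .delta A, ρ => if Form.val I A ρ = 1 then 1 else 0
  | _, .all A, ρ => sInf {v : ℝ | ∃ d : I.Dom, v = Form.val I A (Fin.snoc ρ d)}
  | _, .ex A, ρ => sSup {v : ℝ | ∃ d : I.Dom, v = Form.val I A (Fin.snoc ρ d)}

/-- The value of a sentence. -/
noncomputable def Form.sval {L : Lang} {V : Set ℝ} (I : Interp L V) (A : Form L 0) : ℝ :=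
  Form.val I A Fin.elim0

/-- `A` is valid in `G_V`. -/
def Valid {L : Lang} (V : Set ℝ) (A : Form L 0) : Prop :=
  ∀ I : Interp L V, Form.sval I A = 1

/-- `A` is 1-satisfiable in `G_V`. -/
def OneSat {L : Lang} (V : Set ℝ) (A : Form L 0) : Prop :=
  ∃ I : Interp L V, Form.sval I A = 1

/-- `A` is classically satisfiable: it takes value 1 under a `V`-interpretation
assigning only values in {0,1} to atomic sentences. -/
def ClassSat {L : Lang} (V : Set ℝ) (A : Form L 0) : Prop :=
  ∃ I : Interp L V,
    (∀ {k : ℕ} (R : L.Rel k) (v : Fin k → I.Dom), I.relVal R v = 0 ∨ I.relVal R v = 1) ∧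
    Form.sval I A = 1

/-- ¬A abbreviates A ⊃ ⊥. -/
def Form.not {L : Lang} {n : ℕ} (A : Form L n) : Form L n := Form.impl A Form.falsum

/-- A ↔ B abbreviates (A ⊃ B) ∧ (B ⊃ A). -/
def Form.iff {L : Lang} {n : ℕ} (A B : Form L n) : Form L n :=
  Form.conj (Form.impl A B) (Form.impl B A)

/-- Formulas of the plain language (no Δ). -/
def DeltaFree {L : Lang} : ∀ {n}, Form L n → Prop
  | _, .falsum => True
  | _, .atom _ _ => True
  | _, .conj A B => DeltaFree A ∧ DeltaFree B
  | _, .disj A B => DeltaFree A ∧ DeltaFree B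
  | _, .impl A B => DeltaFree A ∧ DeltaFree B
  | _, .delta _ => False
  | _, .all A => DeltaFree A
  | _, .ex A => DeltaFree A

/-- Quantifier-free formulas. -/
def QuantFree {L : Lang} : ∀ {n}, Form L n → Prop
  | _, .falsum => True
  | _, .atom _ _ => True
  | _, .conj A B => QuantFree A ∧ QuantFree B
  | _, .disj A B => QuantFree A ∧ QuantFree B
  | _, .impl A B => QuantFree A ∧ QuantFree B
  | _, .delta A => QuantFree A
  | _, .all _ => False
  | _, .ex _ => False

/-- Formulas containing no universal quantifier. -/
def AllFree {L : Lang} : ∀ {n}, Form L n → Prop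
  | _, .falsum => True
  | _, .atom _ _ => True
  | _, .conj A B => AllFree A ∧ AllFree B
  | _, .disj A B => AllFree A ∧ AllFree B
  | _, .impl A B => AllFree A ∧ AllFree B
  | _, .delta A => AllFree A
  | _, .all _ => False
  | _, .ex A => AllFree A

/-- Prenex formulas: a block of quantifiers followed by a quantifier-free matrix. -/
inductive IsPrenex {L : Lang} : ∀ {n}, Form L n → Prop
  | qf {n} {A : Form L n} : QuantFree A → IsPrenex A
  | all {n} {A : Form L (n+1)} : IsPrenex A → IsPrenex (Form.all A)
  | ex {n} {A : Form L (n+1)} : IsPrenex A → IsPrenex (Form.ex A)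

/-- Purely existential prenex formulas. -/
inductive ExPrenex {L : Lang} : ∀ {n}, Form L n → Prop
  | qf {n} {A : Form L n} : QuantFree A → ExPrenex A
  | ex {n} {A : Form L (n+1)} : ExPrenex A → ExPrenex (Form.ex A)

/-- The glued interpretation `I_ω`: atoms with value ≤ ω keep their value,
all other atoms get value 1. Same domain and function interpretations. -/
noncomputable def Interp.glue {L : Lang} {V : Set ℝ} (I : Interp L V) (ω : ℝ)
    (h1 : (1:ℝ) ∈ V) : Interp L V where
  Dom := I.Dom
  dom_nonempty := I.dom_nonempty
  funMap := fun {k} f v => I.funMap f v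
  relVal := fun {k} R v => if I.relVal R v ≤ ω then I.relVal R v else 1
  relVal_mem := fun {k} R v => by
    by_cases h : I.relVal R v ≤ ω
    · simpa [h] using I.relVal_mem R v
    · simpa [h] using h1

/-- The Gödel set `V_↑ = {1 - 1/k : k ≥ 1} ∪ {1}`. -/
def Vup : Set ℝ := {x : ℝ | ∃ k : ℕ, 1 ≤ k ∧ x = 1 - 1/(k:ℝ)} ∪ {1}

/-- The `m`-element Gödel set `V_m = {1 - 1/k : 1 ≤ k ≤ m-1} ∪ {1}`. -/
def Vfin (m : ℕ) : Set ℝ :=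
  {x : ℝ | ∃ k : ℕ, 1 ≤ k ∧ k ≤ m - 1 ∧ x = 1 - 1/(k:ℝ)} ∪ {1}

/-- Atomic formula built from a unary predicate. -/
def atom1 {L : Lang} (P : L.Rel 1) {n : ℕ} (t : Term L (Fin n)) : Form L n :=
  Form.atom P fun _ => t

/-- Atomic formula built from a 0-ary predicate (propositional atom). -/
def atom0 {L : Lang} (X : L.Rel 0) {n : ℕ} : Form L n :=
  Form.atom X fun i => i.elim0

def Term.rename {L : Lang} {α β : Type} (f : α → β) : Term L α → Term L β
  | .var i => .var (f i)
  | .func g ts => .func g fun j => Term.rename f (ts j)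

def Form.rename {L : Lang} : ∀ {m n}, (Fin m → Fin n) → Form L m → Form L n
  | _, _, _, .falsum => .falsum
  | _, _, f, .atom R ts => .atom R fun j => (ts j).rename f
  | _, _, f, .conj A B => .conj (A.rename f) (B.rename f)
  | _, _, f, .disj A B => .disj (A.rename f) (B.rename f)
  | _, _, f, .impl A B => .impl (A.rename f) (B.rename f)
  | _, _, f, .delta A => .delta (A.rename f)
  | _, _, f, .all A =>
      .all (A.rename (Fin.lastCases (Fin.last _) fun i => Fin.castSucc (f i)))
  | _, _, f, .ex A =>
      .ex (A.rename (Fin.lastCases (Fin.last _) fun i => Fin.castSucc (f i)))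

/-- Weakening: regard a formula with `n` free variables as one with `n+1`
free variables (not using the new last variable). -/
def Form.lift {L : Lang} {n : ℕ} (A : Form L n) : Form L (n+1) :=
  A.rename Fin.castSucc

def Term.subst {L : Lang} {α β : Type} (σ : α → Term L β) : Term L α → Term L β
  | .var i => σ i
  | .func g ts => .func g fun j => Term.subst σ (ts j)

def Form.subst {L : Lang} : ∀ {m n}, (Fin m → Term L (Fin n)) → Form L m → Form L n
  | _, _, _, .falsum => .falsum
  | _, _, σ, .atom R ts => .atom R fun j => (ts j).subst σ
  | _, _, σ, .conj A B => .conj (A.subst σ) (B.subst σ)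
  | _, _, σ, .disj A B => .disj (A.subst σ) (B.subst σ)
  | _, _, σ, .impl A B => .impl (A.subst σ) (B.subst σ)
  | _, _, σ, .delta A => .delta (A.subst σ)
  | _, _, σ, .all A =>
      .all (A.subst (Fin.lastCases (.var (Fin.last _))
        fun i => (σ i).rename Fin.castSucc))
  | _, _, σ, .ex A =>
      .ex (A.subst (Fin.lastCases (.var (Fin.last _))
        fun i => (σ i).rename Fin.castSucc))

/-- The language `L ∪ {f}` with one new function symbol of arity `a`. -/
def Lang.addFunc (L : Lang) (a : ℕ) : Lang where
  Func := fun k => L.Func k ⊕ PLift (k = a)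
  Rel := L.Rel

/-- The new function symbol of `L.addFunc a`. -/
def newFunc (L : Lang) (a : ℕ) : (L.addFunc a).Func a := Sum.inr ⟨rfl⟩

def Term.emb {L : Lang} {a : ℕ} {α : Type} : Term L α → Term (L.addFunc a) α
  | .var i => .var i
  | .func g ts => .func (Sum.inl g) fun j => Term.emb (ts j)

/-- Embedding of `L`-formulas into the language with the extra function symbol. -/
def Form.emb {L : Lang} {a : ℕ} : ∀ {n}, Form L n → Form (L.addFunc a) n
  | _, .falsum => .falsum
  | _, .atom R ts => .atom R fun j => (ts j).emb
  | _, .conj A B => .conj A.emb B.emb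
  | _, .disj A B => .disj A.emb B.emb
  | _, .impl A B => .impl A.emb B.emb
  | _, .delta A => .delta A.emb
  | _, .all A => .all A.emb
  | _, .ex A => .ex A.emb

/-- Prefix of `n` existential quantifiers (outermost quantifier binds variable 0). -/
def Form.exN {L : Lang} : ∀ n, Form L n → Form L 0
  | 0, A => A
  | n+1, A => Form.exN n (Form.ex A)

/-- Prefix of `n` universal quantifiers (outermost quantifier binds variable 0). -/
def Form.allN {L : Lang} : ∀ n, Form L n → Form L 0
  | 0, A => A
  | n+1, A => Form.allN n (Form.all A)

section Aux
variable {L : Lang} {V : Set ℝ}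

lemma eval_rename {α β : Type} (I : Interp L V) (f : α → β) (v : β → I.Dom) :
    ∀ t : Term L α, Term.eval I v (t.rename f) = Term.eval I (v ∘ f) t
  | .var i => rfl
  | .func g ts => by
      simp only [Term.rename, Term.eval]
      congr 1; funext j; exact eval_rename I f v (ts j)

lemma snoc_comp_ext {n m : ℕ} {D : Type} (f : Fin m → Fin n) (ρ : Fin n → D) (d : D) :
    (Fin.snoc ρ d : Fin (n+1) → D) ∘
      (Fin.lastCases (Fin.last n) (fun i => Fin.castSucc (f i)) : Fin (m+1) → Fin (n+1))
      = Fin.snoc (ρ ∘ f) d := by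
  funext i
  refine Fin.lastCases ?_ (fun j => ?_) i
  · simp
  · simp

lemma val_rename (I : Interp L V) :
    ∀ {m n : ℕ} (f : Fin m → Fin n) (A : Form L m) (ρ : Fin n → I.Dom),
      Form.val I (A.rename f) ρ = Form.val I A (ρ ∘ f)
  | _, _, f, .falsum, ρ => rfl
  | _, _, f, .atom R ts, ρ => by
      simp only [Form.rename, Form.val]
      congr 1; funext j; exact eval_rename I f ρ (ts j)
  | _, _, f, .conj A B, ρ => by
      simp only [Form.rename, Form.val, val_rename I f A ρ, val_rename I f B ρ]
  | _, _, f, .disj A B, ρ => by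
      simp only [Form.rename, Form.val, val_rename I f A ρ, val_rename I f B ρ]
  | _, _, f, .impl A B, ρ => by
      simp only [Form.rename, Form.val, val_rename I f A ρ, val_rename I f B ρ]
  | _, _, f, .delta A, ρ => by
      simp only [Form.rename, Form.val, val_rename I f A ρ]
  | _, _, f, .all A, ρ => by
      simp only [Form.rename, Form.val]
      congr 1; ext v
      constructor
      · rintro ⟨d, rfl⟩
        exact ⟨d, by rw [val_rename, snoc_comp_ext]⟩
      · rintro ⟨d, rfl⟩
        exact ⟨d, by rw [val_rename, snoc_comp_ext]⟩
  | _, _, f, .ex A, ρ => by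
      simp only [Form.rename, Form.val]
      congr 1; ext v
      constructor
      · rintro ⟨d, rfl⟩
        exact ⟨d, by rw [val_rename, snoc_comp_ext]⟩
      · rintro ⟨d, rfl⟩
        exact ⟨d, by rw [val_rename, snoc_comp_ext]⟩

lemma val_lift (I : Interp L V) {n : ℕ} (A : Form L n) (ρ : Fin n → I.Dom) (d : I.Dom) :
    Form.val I (Form.lift A) (Fin.snoc ρ d) = Form.val I A ρ := by
  rw [Form.lift, val_rename]
  congr 1
  funext i
  simp

lemma val_Icc (hV : GodelSet V) (I : Interp L V) :
    ∀ {n : ℕ} (A : Form L n) (ρ : Fin n → I.Dom), Form.val I A ρ ∈ Set.Icc (0:ℝ) 1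
  | _, .falsum, ρ => by simp [Form.val]
  | _, .atom R ts, ρ => hV.2.1 (I.relVal_mem _ _)
  | _, .conj A B, ρ => by
      have hA := val_Icc hV I A ρ; have hB := val_Icc hV I B ρ
      simp only [Form.val, Set.mem_Icc] at *
      exact ⟨le_min hA.1 hB.1, min_le_of_left_le hA.2⟩
  | _, .disj A B, ρ => by
      have hA := val_Icc hV I A ρ; have hB := val_Icc hV I B ρ
      simp only [Form.val, Set.mem_Icc] at *
      exact ⟨le_max_of_le_left hA.1, max_le hA.2 hB.2⟩
  | _, .impl A B, ρ => by
      have hB := val_Icc hV I B ρ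
      simp only [Form.val, Set.mem_Icc] at *
      split_ifs
      · exact ⟨zero_le_one, le_rfl⟩
      · exact hB
  | _, .delta A, ρ => by
      simp only [Form.val, Set.mem_Icc]
      split_ifs
      · exact ⟨zero_le_one, le_rfl⟩
      · exact ⟨le_rfl, zero_le_one⟩
  | _, .all A, ρ => by
      obtain ⟨d⟩ := I.dom_nonempty
      have hsub : ∀ v ∈ {v : ℝ | ∃ d, v = Form.val I A (Fin.snoc ρ d)},
          v ∈ Set.Icc (0:ℝ) 1 := by
        rintro v ⟨e, rfl⟩; exact val_Icc hV I A _
      simp only [Form.val, Set.mem_Icc]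
      constructor
      · exact le_csInf ⟨_, d, rfl⟩ fun v hv => (hsub v hv).1
      · exact csInf_le_of_le ⟨0, fun v hv => (hsub v hv).1⟩ ⟨d, rfl⟩ (hsub _ ⟨d, rfl⟩).2
  | _, .ex A, ρ => by
      obtain ⟨d⟩ := I.dom_nonempty
      have hsub : ∀ v ∈ {v : ℝ | ∃ d, v = Form.val I A (Fin.snoc ρ d)},
          v ∈ Set.Icc (0:ℝ) 1 := by
        rintro v ⟨e, rfl⟩; exact val_Icc hV I A _
      simp only [Form.val, Set.mem_Icc]
      constructor
      · exact le_csSup_of_le ⟨1, fun v hv => (hsub v hv).2⟩ ⟨d, rfl⟩ (hsub _ ⟨d, rfl⟩).1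
      · exact csSup_le ⟨_, d, rfl⟩ fun v hv => (hsub v hv).2

lemma val_mem (hV : GodelSet V) (hfin : V.Finite) (I : Interp L V) :
    ∀ {n : ℕ} (A : Form L n), DeltaFree A → ∀ ρ : Fin n → I.Dom, Form.val I A ρ ∈ V
  | _, .falsum, _, ρ => hV.2.2.1
  | _, .atom R ts, _, ρ => I.relVal_mem _ _
  | _, .conj A B, h, ρ => by
      have hA := val_mem hV hfin I A h.1 ρ; have hB := val_mem hV hfin I B h.2 ρ
      simp only [Form.val]
      rcases le_total (Form.val I A ρ) (Form.val I B ρ) with hle | hle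
      · rwa [min_eq_left hle]
      · rwa [min_eq_right hle]
  | _, .disj A B, h, ρ => by
      have hA := val_mem hV hfin I A h.1 ρ; have hB := val_mem hV hfin I B h.2 ρ
      simp only [Form.val]
      rcases le_total (Form.val I A ρ) (Form.val I B ρ) with hle | hle
      · rwa [max_eq_right hle]
      · rwa [max_eq_left hle]
  | _, .impl A B, h, ρ => by
      have hB := val_mem hV hfin I B h.2 ρ
      simp only [Form.val]
      split_ifs
      · exact hV.2.2.2
      · exact hB
  | _, .delta A, h, ρ => h.elim
  | _, .all A, h, ρ => by
      obtain ⟨d⟩ := I.dom_nonempty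
      have hsub : {v : ℝ | ∃ d, v = Form.val I A (Fin.snoc ρ d)} ⊆ V := by
        rintro v ⟨e, rfl⟩; exact val_mem hV hfin I A h _
      have hne : {v : ℝ | ∃ d, v = Form.val I A (Fin.snoc ρ d)}.Nonempty := ⟨_, d, rfl⟩
      simp only [Form.val]
      exact hsub (hne.csInf_mem (hfin.subset hsub))
  | _, .ex A, h, ρ => by
      obtain ⟨d⟩ := I.dom_nonempty
      have hsub : {v : ℝ | ∃ d, v = Form.val I A (Fin.snoc ρ d)} ⊆ V := by
        rintro v ⟨e, rfl⟩; exact val_mem hV hfin I A h _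
      have hne : {v : ℝ | ∃ d, v = Form.val I A (Fin.snoc ρ d)}.Nonempty := ⟨_, d, rfl⟩
      simp only [Form.val]
      exact hsub (hne.csSup_mem (hfin.subset hsub))

lemma all_attain (hV : GodelSet V) (hfin : V.Finite) (I : Interp L V) {n : ℕ}
    (A : Form L (n+1)) (hA : DeltaFree A) (ρ : Fin n → I.Dom) :
    ∃ d, Form.val I (Form.all A) ρ = Form.val I A (Fin.snoc ρ d) ∧
      ∀ e, Form.val I (Form.all A) ρ ≤ Form.val I A (Fin.snoc ρ e) := by
  obtain ⟨d⟩ := I.dom_nonempty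
  have hsub : {v : ℝ | ∃ d, v = Form.val I A (Fin.snoc ρ d)} ⊆ V := by
    rintro v ⟨e, rfl⟩; exact val_mem hV hfin I A hA _
  have hSfin := hfin.subset hsub
  have hne : {v : ℝ | ∃ d, v = Form.val I A (Fin.snoc ρ d)}.Nonempty := ⟨_, d, rfl⟩
  obtain ⟨e, he⟩ := hne.csInf_mem hSfin
  exact ⟨e, he, fun e' => csInf_le hSfin.bddBelow ⟨e', rfl⟩⟩

lemma ex_attain (hV : GodelSet V) (hfin : V.Finite) (I : Interp L V) {n : ℕ}
    (A : Form L (n+1)) (hA : DeltaFree A) (ρ : Fin n → I.Dom) :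
    ∃ d, Form.val I (Form.ex A) ρ = Form.val I A (Fin.snoc ρ d) ∧
      ∀ e, Form.val I A (Fin.snoc ρ e) ≤ Form.val I (Form.ex A) ρ := by
  obtain ⟨d⟩ := I.dom_nonempty
  have hsub : {v : ℝ | ∃ d, v = Form.val I A (Fin.snoc ρ d)} ⊆ V := by
    rintro v ⟨e, rfl⟩; exact val_mem hV hfin I A hA _
  have hSfin := hfin.subset hsub
  have hne : {v : ℝ | ∃ d, v = Form.val I A (Fin.snoc ρ d)}.Nonempty := ⟨_, d, rfl⟩
  obtain ⟨e, he⟩ := hne.csSup_mem hSfin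
  exact ⟨e, he, fun e' => le_csSup hSfin.bddAbove ⟨e', rfl⟩⟩

lemma all_congr (I : Interp L V) {n : ℕ} {A B : Form L (n+1)} (ρ : Fin n → I.Dom)
    (h : ∀ d, Form.val I A (Fin.snoc ρ d) = Form.val I B (Fin.snoc ρ d)) :
    Form.val I (Form.all A) ρ = Form.val I (Form.all B) ρ := by
  simp only [Form.val]
  congr 1
  ext v
  simp only [Set.mem_setOf_eq, h]

lemma ex_congr (I : Interp L V) {n : ℕ} {A B : Form L (n+1)} (ρ : Fin n → I.Dom)
    (h : ∀ d, Form.val I A (Fin.snoc ρ d) = Form.val I B (Fin.snoc ρ d)) :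
    Form.val I (Form.ex A) ρ = Form.val I (Form.ex B) ρ := by
  simp only [Form.val]
  congr 1
  ext v
  simp only [Set.mem_setOf_eq, h]

/-- Gödel implication on truth values. -/
noncomputable def gv (x y : ℝ) : ℝ := if x ≤ y then 1 else y

lemma val_impl_gv (I : Interp L V) {n : ℕ} (A B : Form L n) (ρ : Fin n → I.Dom) :
    Form.val I (Form.impl A B) ρ = gv (Form.val I A ρ) (Form.val I B ρ) := rfl

lemma gv_anti {x x' y : ℝ} (h : x' ≤ x) (hy : y ≤ 1) : gv x y ≤ gv x' y := by
  unfold gv; split_ifs <;> linarith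

lemma gv_mono {x y y' : ℝ} (h : y ≤ y') (hy' : y' ≤ 1) : gv x y ≤ gv x y' := by
  unfold gv; split_ifs <;> linarith

lemma le_gv {x y : ℝ} (hy : y ≤ 1) : y ≤ gv x y := by
  unfold gv; split_ifs <;> linarith

-- H1
lemma inf_min_eq (hV : GodelSet V) (hfin : V.Finite) (I : Interp L V) {n : ℕ}
    {C A : Form L (n+1)} (hC : DeltaFree C) (hA : DeltaFree A) {b : ℝ}
    (ρ : Fin n → I.Dom)
    (hpt : ∀ d, Form.val I C (Fin.snoc ρ d) = min (Form.val I A (Fin.snoc ρ d)) b) :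
    Form.val I (Form.all C) ρ = min (Form.val I (Form.all A) ρ) b := by
  obtain ⟨d₀, hd₀, hlbC⟩ := all_attain hV hfin I C hC ρ
  obtain ⟨d₁, hd₁, hlbA⟩ := all_attain hV hfin I A hA ρ
  apply le_antisymm
  · calc Form.val I (Form.all C) ρ ≤ Form.val I C (Fin.snoc ρ d₁) := hlbC d₁
      _ = min (Form.val I A (Fin.snoc ρ d₁)) b := hpt d₁
      _ = min (Form.val I (Form.all A) ρ) b := by rw [hd₁]
  · rw [hd₀, hpt d₀]
    exact min_le_min (hlbA d₀) le_rfl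

-- H2
lemma sup_min_eq (hV : GodelSet V) (hfin : V.Finite) (I : Interp L V) {n : ℕ}
    {C A : Form L (n+1)} (hC : DeltaFree C) (hA : DeltaFree A) {b : ℝ}
    (ρ : Fin n → I.Dom)
    (hpt : ∀ d, Form.val I C (Fin.snoc ρ d) = min (Form.val I A (Fin.snoc ρ d)) b) :
    Form.val I (Form.ex C) ρ = min (Form.val I (Form.ex A) ρ) b := by
  obtain ⟨d₀, hd₀, hubC⟩ := ex_attain hV hfin I C hC ρ
  obtain ⟨d₁, hd₁, hubA⟩ := ex_attain hV hfin I A hA ρ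
  apply le_antisymm
  · rw [hd₀, hpt d₀]
    exact min_le_min (hubA d₀) le_rfl
  · calc min (Form.val I (Form.ex A) ρ) b = min (Form.val I A (Fin.snoc ρ d₁)) b := by rw [hd₁]
      _ = Form.val I C (Fin.snoc ρ d₁) := (hpt d₁).symm
      _ ≤ Form.val I (Form.ex C) ρ := hubC d₁

-- H3
lemma inf_max_eq (hV : GodelSet V) (hfin : V.Finite) (I : Interp L V) {n : ℕ}
    {C A : Form L (n+1)} (hC : DeltaFree C) (hA : DeltaFree A) {b : ℝ}
    (ρ : Fin n → I.Dom)
    (hpt : ∀ d, Form.val I C (Fin.snoc ρ d) = max (Form.val I A (Fin.snoc ρ d)) b) :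
    Form.val I (Form.all C) ρ = max (Form.val I (Form.all A) ρ) b := by
  obtain ⟨d₀, hd₀, hlbC⟩ := all_attain hV hfin I C hC ρ
  obtain ⟨d₁, hd₁, hlbA⟩ := all_attain hV hfin I A hA ρ
  apply le_antisymm
  · calc Form.val I (Form.all C) ρ ≤ Form.val I C (Fin.snoc ρ d₁) := hlbC d₁
      _ = max (Form.val I A (Fin.snoc ρ d₁)) b := hpt d₁
      _ = max (Form.val I (Form.all A) ρ) b := by rw [hd₁]
  · rw [hd₀, hpt d₀]
    exact max_le_max (hlbA d₀) le_rfl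

-- H4
lemma sup_max_eq (hV : GodelSet V) (hfin : V.Finite) (I : Interp L V) {n : ℕ}
    {C A : Form L (n+1)} (hC : DeltaFree C) (hA : DeltaFree A) {b : ℝ}
    (ρ : Fin n → I.Dom)
    (hpt : ∀ d, Form.val I C (Fin.snoc ρ d) = max (Form.val I A (Fin.snoc ρ d)) b) :
    Form.val I (Form.ex C) ρ = max (Form.val I (Form.ex A) ρ) b := by
  obtain ⟨d₀, hd₀, hubC⟩ := ex_attain hV hfin I C hC ρ
  obtain ⟨d₁, hd₁, hubA⟩ := ex_attain hV hfin I A hA ρ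
  apply le_antisymm
  · rw [hd₀, hpt d₀]
    exact max_le_max (hubA d₀) le_rfl
  · calc max (Form.val I (Form.ex A) ρ) b = max (Form.val I A (Fin.snoc ρ d₁)) b := by rw [hd₁]
      _ = Form.val I C (Fin.snoc ρ d₁) := (hpt d₁).symm
      _ ≤ Form.val I (Form.ex C) ρ := hubC d₁

-- H5 : ∀x (A ⊃ B)  ≡  (∃x A) ⊃ B
lemma inf_gv_left (hV : GodelSet V) (hfin : V.Finite) (I : Interp L V) {n : ℕ}
    {C A : Form L (n+1)} (hC : DeltaFree C) (hA : DeltaFree A) {b : ℝ} (hb : b ≤ 1)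
    (ρ : Fin n → I.Dom)
    (hpt : ∀ d, Form.val I C (Fin.snoc ρ d) = gv (Form.val I A (Fin.snoc ρ d)) b) :
    Form.val I (Form.all C) ρ = gv (Form.val I (Form.ex A) ρ) b := by
  obtain ⟨d₀, hd₀, hlbC⟩ := all_attain hV hfin I C hC ρ
  obtain ⟨d₁, hd₁, hubA⟩ := ex_attain hV hfin I A hA ρ
  apply le_antisymm
  · calc Form.val I (Form.all C) ρ ≤ Form.val I C (Fin.snoc ρ d₁) := hlbC d₁
      _ = gv (Form.val I A (Fin.snoc ρ d₁)) b := hpt d₁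
      _ = gv (Form.val I (Form.ex A) ρ) b := by rw [hd₁]
  · rw [hd₀, hpt d₀]
    exact gv_anti (hubA d₀) hb

-- H6 : ∃x (A ⊃ B)  ≡  (∀x A) ⊃ B
lemma sup_gv_left (hV : GodelSet V) (hfin : V.Finite) (I : Interp L V) {n : ℕ}
    {C A : Form L (n+1)} (hC : DeltaFree C) (hA : DeltaFree A) {b : ℝ} (hb : b ≤ 1)
    (ρ : Fin n → I.Dom)
    (hpt : ∀ d, Form.val I C (Fin.snoc ρ d) = gv (Form.val I A (Fin.snoc ρ d)) b) :
    Form.val I (Form.ex C) ρ = gv (Form.val I (Form.all A) ρ) b := by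
  obtain ⟨d₀, hd₀, hubC⟩ := ex_attain hV hfin I C hC ρ
  obtain ⟨d₁, hd₁, hlbA⟩ := all_attain hV hfin I A hA ρ
  apply le_antisymm
  · rw [hd₀, hpt d₀]
    exact gv_anti (hlbA d₀) hb
  · calc gv (Form.val I (Form.all A) ρ) b = gv (Form.val I A (Fin.snoc ρ d₁)) b := by rw [hd₁]
      _ = Form.val I C (Fin.snoc ρ d₁) := (hpt d₁).symm
      _ ≤ Form.val I (Form.ex C) ρ := hubC d₁

-- H7 : ∀x (B ⊃ A)  ≡  B ⊃ ∀x A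
lemma inf_gv_right (hV : GodelSet V) (hfin : V.Finite) (I : Interp L V) {n : ℕ}
    {C A : Form L (n+1)} (hC : DeltaFree C) (hA : DeltaFree A) {b : ℝ}
    (ρ : Fin n → I.Dom) (h1 : ∀ d, Form.val I A (Fin.snoc ρ d) ≤ 1)
    (hpt : ∀ d, Form.val I C (Fin.snoc ρ d) = gv b (Form.val I A (Fin.snoc ρ d))) :
    Form.val I (Form.all C) ρ = gv b (Form.val I (Form.all A) ρ) := by
  obtain ⟨d₀, hd₀, hlbC⟩ := all_attain hV hfin I C hC ρ
  obtain ⟨d₁, hd₁, hlbA⟩ := all_attain hV hfin I A hA ρ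
  apply le_antisymm
  · calc Form.val I (Form.all C) ρ ≤ Form.val I C (Fin.snoc ρ d₁) := hlbC d₁
      _ = gv b (Form.val I A (Fin.snoc ρ d₁)) := hpt d₁
      _ = gv b (Form.val I (Form.all A) ρ) := by rw [hd₁]
  · rw [hd₀, hpt d₀]
    exact gv_mono (hlbA d₀) (h1 d₀)

-- H8 : ∃x (B ⊃ A)  ≡  B ⊃ ∃x A
lemma sup_gv_right (hV : GodelSet V) (hfin : V.Finite) (I : Interp L V) {n : ℕ}
    {C A : Form L (n+1)} (hC : DeltaFree C) (hA : DeltaFree A) {b : ℝ}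
    (ρ : Fin n → I.Dom) (h1 : Form.val I (Form.ex A) ρ ≤ 1)
    (hpt : ∀ d, Form.val I C (Fin.snoc ρ d) = gv b (Form.val I A (Fin.snoc ρ d))) :
    Form.val I (Form.ex C) ρ = gv b (Form.val I (Form.ex A) ρ) := by
  obtain ⟨d₀, hd₀, hubC⟩ := ex_attain hV hfin I C hC ρ
  obtain ⟨d₁, hd₁, hubA⟩ := ex_attain hV hfin I A hA ρ
  apply le_antisymm
  · rw [hd₀, hpt d₀]
    exact gv_mono (hubA d₀) (hd₁ ▸ h1)
  · calc gv b (Form.val I (Form.ex A) ρ) = gv b (Form.val I A (Fin.snoc ρ d₁)) := by rw [hd₁]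
      _ = Form.val I C (Fin.snoc ρ d₁) := (hpt d₁).symm
      _ ≤ Form.val I (Form.ex C) ρ := hubC d₁

lemma QuantFree.rename' : ∀ {m n : ℕ} (f : Fin m → Fin n) (A : Form L m),
    QuantFree A → QuantFree (A.rename f)
  | _, _, f, .falsum, h => trivial
  | _, _, f, .atom R ts, h => trivial
  | _, _, f, .conj A B, h => ⟨QuantFree.rename' f A h.1, QuantFree.rename' f B h.2⟩
  | _, _, f, .disj A B, h => ⟨QuantFree.rename' f A h.1, QuantFree.rename' f B h.2⟩
  | _, _, f, .impl A B, h => ⟨QuantFree.rename' f A h.1, QuantFree.rename' f B h.2⟩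
  | _, _, f, .delta A, h => QuantFree.rename' f A h
  | _, _, f, .all A, h => h.elim
  | _, _, f, .ex A, h => h.elim

lemma DeltaFree.rename' : ∀ {m n : ℕ} (f : Fin m → Fin n) (A : Form L m),
    DeltaFree A → DeltaFree (A.rename f)
  | _, _, f, .falsum, h => trivial
  | _, _, f, .atom R ts, h => trivial
  | _, _, f, .conj A B, h => ⟨DeltaFree.rename' f A h.1, DeltaFree.rename' f B h.2⟩
  | _, _, f, .disj A B, h => ⟨DeltaFree.rename' f A h.1, DeltaFree.rename' f B h.2⟩
  | _, _, f, .impl A B, h => ⟨DeltaFree.rename' f A h.1, DeltaFree.rename' f B h.2⟩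
  | _, _, f, .delta A, h => h.elim
  | _, _, f, .all A, h => DeltaFree.rename' _ A h
  | _, _, f, .ex A, h => DeltaFree.rename' _ A h

lemma IsPrenex.rename' {m : ℕ} {A : Form L m} (h : IsPrenex A) :
    ∀ {n : ℕ} (f : Fin m → Fin n), IsPrenex (A.rename f) := by
  induction h with
  | qf hq => intro n f; exact IsPrenex.qf (QuantFree.rename' f _ hq)
  | all hp ih => intro n f; exact IsPrenex.all (ih _)
  | ex hp ih => intro n f; exact IsPrenex.ex (ih _)

lemma conj_qf (hV : GodelSet V) (hfin : V.Finite) :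
    ∀ {n : ℕ} {Q : Form L n}, IsPrenex Q →
    ∀ P : Form L n, QuantFree P → DeltaFree P → DeltaFree Q →
    ∃ R : Form L n, IsPrenex R ∧ DeltaFree R ∧
      ∀ (I : Interp L V) (ρ : Fin n → I.Dom),
        Form.val I R ρ = min (Form.val I P ρ) (Form.val I Q ρ) := by
  intro n Q hQ
  induction hQ with
  | qf hq =>
      rename_i m Q0
      intro P hPq hPd hQd
      exact ⟨Form.conj P Q0, .qf ⟨hPq, hq⟩, ⟨hPd, hQd⟩, fun I ρ => rfl⟩
  | all hQ' ih =>
      rename_i m Q'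
      intro P hPq hPd hQd
      obtain ⟨R', hRp, hRd, hRv⟩ := ih (Form.lift P) (QuantFree.rename' _ P hPq)
        (DeltaFree.rename' _ P hPd) hQd
      refine ⟨Form.all R', .all hRp, hRd, fun I ρ => ?_⟩
      have hpt : ∀ d, Form.val I R' (Fin.snoc ρ d)
          = min (Form.val I Q' (Fin.snoc ρ d)) (Form.val I P ρ) := by
        intro d; rw [hRv, val_lift, min_comm]
      rw [inf_min_eq hV hfin I hRd hQd ρ hpt, min_comm]
  | ex hQ' ih =>
      rename_i m Q'
      intro P hPq hPd hQd
      obtain ⟨R', hRp, hRd, hRv⟩ := ih (Form.lift P) (QuantFree.rename' _ P hPq)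
        (DeltaFree.rename' _ P hPd) hQd
      refine ⟨Form.ex R', .ex hRp, hRd, fun I ρ => ?_⟩
      have hpt : ∀ d, Form.val I R' (Fin.snoc ρ d)
          = min (Form.val I Q' (Fin.snoc ρ d)) (Form.val I P ρ) := by
        intro d; rw [hRv, val_lift, min_comm]
      rw [sup_min_eq hV hfin I hRd hQd ρ hpt, min_comm]

lemma conj_prenex (hV : GodelSet V) (hfin : V.Finite) :
    ∀ {n : ℕ} {P : Form L n}, IsPrenex P →
    ∀ Q : Form L n, IsPrenex Q → DeltaFree P → DeltaFree Q →
    ∃ R : Form L n, IsPrenex R ∧ DeltaFree R ∧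
      ∀ (I : Interp L V) (ρ : Fin n → I.Dom),
        Form.val I R ρ = min (Form.val I P ρ) (Form.val I Q ρ) := by
  intro n P hP
  induction hP with
  | qf hp =>
      intro Q hQ hPd hQd
      exact conj_qf hV hfin hQ _ hp hPd hQd
  | all hP' ih =>
      rename_i m P'
      intro Q hQ hPd hQd
      obtain ⟨R', hRp, hRd, hRv⟩ := ih (Form.lift Q) (IsPrenex.rename' hQ _) hPd
        (DeltaFree.rename' _ Q hQd)
      refine ⟨Form.all R', .all hRp, hRd, fun I ρ => ?_⟩
      have hpt : ∀ d, Form.val I R' (Fin.snoc ρ d)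
          = min (Form.val I P' (Fin.snoc ρ d)) (Form.val I Q ρ) := by
        intro d; rw [hRv, val_lift]
      exact inf_min_eq hV hfin I hRd hPd ρ hpt
  | ex hP' ih =>
      rename_i m P'
      intro Q hQ hPd hQd
      obtain ⟨R', hRp, hRd, hRv⟩ := ih (Form.lift Q) (IsPrenex.rename' hQ _) hPd
        (DeltaFree.rename' _ Q hQd)
      refine ⟨Form.ex R', .ex hRp, hRd, fun I ρ => ?_⟩
      have hpt : ∀ d, Form.val I R' (Fin.snoc ρ d)
          = min (Form.val I P' (Fin.snoc ρ d)) (Form.val I Q ρ) := by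
        intro d; rw [hRv, val_lift]
      exact sup_min_eq hV hfin I hRd hPd ρ hpt

lemma disj_qf (hV : GodelSet V) (hfin : V.Finite) :
    ∀ {n : ℕ} {Q : Form L n}, IsPrenex Q →
    ∀ P : Form L n, QuantFree P → DeltaFree P → DeltaFree Q →
    ∃ R : Form L n, IsPrenex R ∧ DeltaFree R ∧
      ∀ (I : Interp L V) (ρ : Fin n → I.Dom),
        Form.val I R ρ = max (Form.val I P ρ) (Form.val I Q ρ) := by
  intro n Q hQ
  induction hQ with
  | qf hq =>
      rename_i m Q0
      intro P hPq hPd hQd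
      exact ⟨Form.disj P Q0, .qf ⟨hPq, hq⟩, ⟨hPd, hQd⟩, fun I ρ => rfl⟩
  | all hQ' ih =>
      rename_i m Q'
      intro P hPq hPd hQd
      obtain ⟨R', hRp, hRd, hRv⟩ := ih (Form.lift P) (QuantFree.rename' _ P hPq)
        (DeltaFree.rename' _ P hPd) hQd
      refine ⟨Form.all R', .all hRp, hRd, fun I ρ => ?_⟩
      have hpt : ∀ d, Form.val I R' (Fin.snoc ρ d)
          = max (Form.val I Q' (Fin.snoc ρ d)) (Form.val I P ρ) := by
        intro d; rw [hRv, val_lift, max_comm]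
      rw [inf_max_eq hV hfin I hRd hQd ρ hpt, max_comm]
  | ex hQ' ih =>
      rename_i m Q'
      intro P hPq hPd hQd
      obtain ⟨R', hRp, hRd, hRv⟩ := ih (Form.lift P) (QuantFree.rename' _ P hPq)
        (DeltaFree.rename' _ P hPd) hQd
      refine ⟨Form.ex R', .ex hRp, hRd, fun I ρ => ?_⟩
      have hpt : ∀ d, Form.val I R' (Fin.snoc ρ d)
          = max (Form.val I Q' (Fin.snoc ρ d)) (Form.val I P ρ) := by
        intro d; rw [hRv, val_lift, max_comm]
      rw [sup_max_eq hV hfin I hRd hQd ρ hpt, max_comm]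

lemma disj_prenex (hV : GodelSet V) (hfin : V.Finite) :
    ∀ {n : ℕ} {P : Form L n}, IsPrenex P →
    ∀ Q : Form L n, IsPrenex Q → DeltaFree P → DeltaFree Q →
    ∃ R : Form L n, IsPrenex R ∧ DeltaFree R ∧
      ∀ (I : Interp L V) (ρ : Fin n → I.Dom),
        Form.val I R ρ = max (Form.val I P ρ) (Form.val I Q ρ) := by
  intro n P hP
  induction hP with
  | qf hp =>
      intro Q hQ hPd hQd
      exact disj_qf hV hfin hQ _ hp hPd hQd
  | all hP' ih =>
      rename_i m P'
      intro Q hQ hPd hQd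
      obtain ⟨R', hRp, hRd, hRv⟩ := ih (Form.lift Q) (IsPrenex.rename' hQ _) hPd
        (DeltaFree.rename' _ Q hQd)
      refine ⟨Form.all R', .all hRp, hRd, fun I ρ => ?_⟩
      have hpt : ∀ d, Form.val I R' (Fin.snoc ρ d)
          = max (Form.val I P' (Fin.snoc ρ d)) (Form.val I Q ρ) := by
        intro d; rw [hRv, val_lift]
      exact inf_max_eq hV hfin I hRd hPd ρ hpt
  | ex hP' ih =>
      rename_i m P'
      intro Q hQ hPd hQd
      obtain ⟨R', hRp, hRd, hRv⟩ := ih (Form.lift Q) (IsPrenex.rename' hQ _) hPd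
        (DeltaFree.rename' _ Q hQd)
      refine ⟨Form.ex R', .ex hRp, hRd, fun I ρ => ?_⟩
      have hpt : ∀ d, Form.val I R' (Fin.snoc ρ d)
          = max (Form.val I P' (Fin.snoc ρ d)) (Form.val I Q ρ) := by
        intro d; rw [hRv, val_lift]
      exact sup_max_eq hV hfin I hRd hPd ρ hpt

lemma impl_qf (hV : GodelSet V) (hfin : V.Finite) :
    ∀ {n : ℕ} {Q : Form L n}, IsPrenex Q →
    ∀ P : Form L n, QuantFree P → DeltaFree P → DeltaFree Q →
    ∃ R : Form L n, IsPrenex R ∧ DeltaFree R ∧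
      ∀ (I : Interp L V) (ρ : Fin n → I.Dom),
        Form.val I R ρ = gv (Form.val I P ρ) (Form.val I Q ρ) := by
  intro n Q hQ
  induction hQ with
  | qf hq =>
      rename_i m Q0
      intro P hPq hPd hQd
      exact ⟨Form.impl P Q0, .qf ⟨hPq, hq⟩, ⟨hPd, hQd⟩, fun I ρ => rfl⟩
  | all hQ' ih =>
      rename_i m Q'
      intro P hPq hPd hQd
      obtain ⟨R', hRp, hRd, hRv⟩ := ih (Form.lift P) (QuantFree.rename' _ P hPq)
        (DeltaFree.rename' _ P hPd) hQd
      refine ⟨Form.all R', .all hRp, hRd, fun I ρ => ?_⟩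
      have hpt : ∀ d, Form.val I R' (Fin.snoc ρ d)
          = gv (Form.val I P ρ) (Form.val I Q' (Fin.snoc ρ d)) := by
        intro d; rw [hRv, val_lift]
      exact inf_gv_right hV hfin I hRd hQd ρ (fun d => (val_Icc hV I Q' _).2) hpt
  | ex hQ' ih =>
      rename_i m Q'
      intro P hPq hPd hQd
      obtain ⟨R', hRp, hRd, hRv⟩ := ih (Form.lift P) (QuantFree.rename' _ P hPq)
        (DeltaFree.rename' _ P hPd) hQd
      refine ⟨Form.ex R', .ex hRp, hRd, fun I ρ => ?_⟩
      have hpt : ∀ d, Form.val I R' (Fin.snoc ρ d)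
          = gv (Form.val I P ρ) (Form.val I Q' (Fin.snoc ρ d)) := by
        intro d; rw [hRv, val_lift]
      exact sup_gv_right hV hfin I hRd hQd ρ (val_Icc hV I (Form.ex Q') ρ).2 hpt

lemma impl_prenex (hV : GodelSet V) (hfin : V.Finite) :
    ∀ {n : ℕ} {P : Form L n}, IsPrenex P →
    ∀ Q : Form L n, IsPrenex Q → DeltaFree P → DeltaFree Q →
    ∃ R : Form L n, IsPrenex R ∧ DeltaFree R ∧
      ∀ (I : Interp L V) (ρ : Fin n → I.Dom),
        Form.val I R ρ = gv (Form.val I P ρ) (Form.val I Q ρ) := by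
  intro n P hP
  induction hP with
  | qf hp =>
      intro Q hQ hPd hQd
      exact impl_qf hV hfin hQ _ hp hPd hQd
  | all hP' ih =>
      rename_i m P'
      intro Q hQ hPd hQd
      obtain ⟨R', hRp, hRd, hRv⟩ := ih (Form.lift Q) (IsPrenex.rename' hQ _) hPd
        (DeltaFree.rename' _ Q hQd)
      refine ⟨Form.ex R', .ex hRp, hRd, fun I ρ => ?_⟩
      have hpt : ∀ d, Form.val I R' (Fin.snoc ρ d)
          = gv (Form.val I P' (Fin.snoc ρ d)) (Form.val I Q ρ) := by
        intro d; rw [hRv, val_lift]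
      exact sup_gv_left hV hfin I hRd hPd (val_Icc hV I Q ρ).2 ρ hpt
  | ex hP' ih =>
      rename_i m P'
      intro Q hQ hPd hQd
      obtain ⟨R', hRp, hRd, hRv⟩ := ih (Form.lift Q) (IsPrenex.rename' hQ _) hPd
        (DeltaFree.rename' _ Q hQd)
      refine ⟨Form.all R', .all hRp, hRd, fun I ρ => ?_⟩
      have hpt : ∀ d, Form.val I R' (Fin.snoc ρ d)
          = gv (Form.val I P' (Fin.snoc ρ d)) (Form.val I Q ρ) := by
        intro d; rw [hRv, val_lift]
      exact inf_gv_left hV hfin I hRd hPd (val_Icc hV I Q ρ).2 ρ hpt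

lemma prenex_main (hV : GodelSet V) (hfin : V.Finite) :
    ∀ {n : ℕ} (C : Form L n), DeltaFree C →
    ∃ P : Form L n, IsPrenex P ∧ DeltaFree P ∧
      ∀ (I : Interp L V) (ρ : Fin n → I.Dom), Form.val I C ρ = Form.val I P ρ
  | _, .falsum, h => ⟨.falsum, .qf trivial, trivial, fun _ _ => rfl⟩
  | _, .atom R ts, h => ⟨.atom R ts, .qf trivial, trivial, fun _ _ => rfl⟩
  | _, .conj A B, h => by
      obtain ⟨PA, hPAp, hPAd, hPAv⟩ := prenex_main hV hfin A h.1
      obtain ⟨PB, hPBp, hPBd, hPBv⟩ := prenex_main hV hfin B h.2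
      obtain ⟨R, hRp, hRd, hRv⟩ := conj_prenex hV hfin hPAp PB hPBp hPAd hPBd
      refine ⟨R, hRp, hRd, fun I ρ => ?_⟩
      simp only [Form.val]
      rw [hPAv I ρ, hPBv I ρ, hRv I ρ]
  | _, .disj A B, h => by
      obtain ⟨PA, hPAp, hPAd, hPAv⟩ := prenex_main hV hfin A h.1
      obtain ⟨PB, hPBp, hPBd, hPBv⟩ := prenex_main hV hfin B h.2
      obtain ⟨R, hRp, hRd, hRv⟩ := disj_prenex hV hfin hPAp PB hPBp hPAd hPBd
      refine ⟨R, hRp, hRd, fun I ρ => ?_⟩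
      simp only [Form.val]
      rw [hPAv I ρ, hPBv I ρ, hRv I ρ]
  | _, .impl A B, h => by
      obtain ⟨PA, hPAp, hPAd, hPAv⟩ := prenex_main hV hfin A h.1
      obtain ⟨PB, hPBp, hPBd, hPBv⟩ := prenex_main hV hfin B h.2
      obtain ⟨R, hRp, hRd, hRv⟩ := impl_prenex hV hfin hPAp PB hPBp hPAd hPBd
      refine ⟨R, hRp, hRd, fun I ρ => ?_⟩
      rw [val_impl_gv, hPAv I ρ, hPBv I ρ, hRv I ρ]
  | _, .delta A, h => h.elim
  | _, .all A, h => by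
      obtain ⟨P, hp, hd, hv⟩ := prenex_main hV hfin A h
      exact ⟨.all P, .all hp, hd, fun I ρ => all_congr I ρ fun d => hv I _⟩
  | _, .ex A, h => by
      obtain ⟨P, hp, hd, hv⟩ := prenex_main hV hfin A h
      exact ⟨.ex P, .ex hp, hd, fun I ρ => ex_congr I ρ fun d => hv I _⟩

lemma valid_iff {X Y : Form L 0} (h : ∀ I : Interp L V, Form.sval I X = Form.sval I Y) :
    Valid V (Form.iff X Y) := by
  intro I
  have hxy := h I
  simp only [Form.sval] at hxy ⊢
  simp [Form.iff, Form.val, hxy]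

end Aux

/-- For a finite Gödel set `V`: the quantifier-shift schemas
`(B ⊃ ∃x A(x)) ⊃ ∃x(B ⊃ A(x))` and `(∀x A(x) ⊃ B) ⊃ ∃x(A(x) ⊃ B)` are valid in
`G_V`, as are all remaining classical quantifier-shift schemas (stated as the
eight shift equivalences), and consequently every sentence has a logically
equivalent prenex sentence in `G_V`. -/
theorem stmt_10 {L : Lang} {V : Set ℝ} (hV : GodelSet V) (hfin : V.Finite) :
    (∀ (A : Form L 1) (B : Form L 0), DeltaFree A → DeltaFree B →
      Valid V (Form.impl (Form.impl B (Form.ex A))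
        (Form.ex (Form.impl (Form.lift B) A)))) ∧
    (∀ (A : Form L 1) (B : Form L 0), DeltaFree A → DeltaFree B →
      Valid V (Form.impl (Form.impl (Form.all A) B)
        (Form.ex (Form.impl A (Form.lift B))))) ∧
    (∀ (A : Form L 1) (B : Form L 0), DeltaFree A → DeltaFree B →
      Valid V (Form.iff (Form.all (Form.conj A (Form.lift B)))
        (Form.conj (Form.all A) B)) ∧
      Valid V (Form.iff (Form.ex (Form.conj A (Form.lift B)))
        (Form.conj (Form.ex A) B)) ∧
      Valid V (Form.iff (Form.all (Form.disj A (Form.lift B)))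
        (Form.disj (Form.all A) B)) ∧
      Valid V (Form.iff (Form.ex (Form.disj A (Form.lift B)))
        (Form.disj (Form.ex A) B)) ∧
      Valid V (Form.iff (Form.all (Form.impl A (Form.lift B)))
        (Form.impl (Form.ex A) B)) ∧
      Valid V (Form.iff (Form.ex (Form.impl A (Form.lift B)))
        (Form.impl (Form.all A) B)) ∧
      Valid V (Form.iff (Form.all (Form.impl (Form.lift B) A))
        (Form.impl B (Form.all A))) ∧
      Valid V (Form.iff (Form.ex (Form.impl (Form.lift B) A))
        (Form.impl B (Form.ex A)))) ∧
    (∀ C : Form L 0, DeltaFree C → ∃ P : Form L 0, IsPrenex P ∧ DeltaFree P ∧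
      ∀ I : Interp L V, Form.sval I C = Form.sval I P) := by
  refine ⟨?_, ?_, ?_, ?_⟩
  · -- (B ⊃ ∃x A) ⊃ ∃x (B ⊃ A)
    intro A B hA hB I
    have hBd' : DeltaFree (Form.lift B) := DeltaFree.rename' _ B hB
    obtain ⟨d₁, hd₁, -⟩ := ex_attain hV hfin I A hA Fin.elim0
    obtain ⟨-, -, hub₂⟩ := ex_attain hV hfin I (Form.impl (Form.lift B) A)
      ⟨hBd', hA⟩ Fin.elim0
    have hY := hub₂ d₁
    rw [val_impl_gv, val_lift] at hY
    show Form.val I _ Fin.elim0 = 1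
    rw [val_impl_gv, val_impl_gv, hd₁]
    unfold gv at hY ⊢
    rw [if_pos hY]
  · -- (∀x A ⊃ B) ⊃ ∃x (A ⊃ B)
    intro A B hA hB I
    have hBd' : DeltaFree (Form.lift B) := DeltaFree.rename' _ B hB
    obtain ⟨d₀, hd₀, -⟩ := all_attain hV hfin I A hA Fin.elim0
    obtain ⟨-, -, hub₂⟩ := ex_attain hV hfin I (Form.impl A (Form.lift B))
      ⟨hA, hBd'⟩ Fin.elim0
    have hY := hub₂ d₀
    rw [val_impl_gv, val_lift] at hY
    show Form.val I _ Fin.elim0 = 1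
    rw [val_impl_gv, val_impl_gv, hd₀]
    unfold gv at hY ⊢
    rw [if_pos hY]
  · -- the eight shift equivalences
    intro A B hA hB
    have hBd' : DeltaFree (Form.lift B) := DeltaFree.rename' _ B hB
    have hcd : DeltaFree (Form.conj A (Form.lift B)) := ⟨hA, hBd'⟩
    have hdd : DeltaFree (Form.disj A (Form.lift B)) := ⟨hA, hBd'⟩
    have hid : DeltaFree (Form.impl A (Form.lift B)) := ⟨hA, hBd'⟩
    have hid' : DeltaFree (Form.impl (Form.lift B) A) := ⟨hBd', hA⟩
    refine ⟨?_, ?_, ?_, ?_, ?_, ?_, ?_, ?_⟩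
    · refine valid_iff fun I => ?_
      simp only [Form.sval]
      have hpt : ∀ d, Form.val I (Form.conj A (Form.lift B)) (Fin.snoc Fin.elim0 d)
          = min (Form.val I A (Fin.snoc Fin.elim0 d)) (Form.val I B Fin.elim0) := by
        intro d; simp only [Form.val]; rw [val_lift]
      exact inf_min_eq hV hfin I hcd hA Fin.elim0 hpt
    · refine valid_iff fun I => ?_
      simp only [Form.sval]
      have hpt : ∀ d, Form.val I (Form.conj A (Form.lift B)) (Fin.snoc Fin.elim0 d)
          = min (Form.val I A (Fin.snoc Fin.elim0 d)) (Form.val I B Fin.elim0) := by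
        intro d; simp only [Form.val]; rw [val_lift]
      exact sup_min_eq hV hfin I hcd hA Fin.elim0 hpt
    · refine valid_iff fun I => ?_
      simp only [Form.sval]
      have hpt : ∀ d, Form.val I (Form.disj A (Form.lift B)) (Fin.snoc Fin.elim0 d)
          = max (Form.val I A (Fin.snoc Fin.elim0 d)) (Form.val I B Fin.elim0) := by
        intro d; simp only [Form.val]; rw [val_lift]
      exact inf_max_eq hV hfin I hdd hA Fin.elim0 hpt
    · refine valid_iff fun I => ?_
      simp only [Form.sval]
      have hpt : ∀ d, Form.val I (Form.disj A (Form.lift B)) (Fin.snoc Fin.elim0 d)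
          = max (Form.val I A (Fin.snoc Fin.elim0 d)) (Form.val I B Fin.elim0) := by
        intro d; simp only [Form.val]; rw [val_lift]
      exact sup_max_eq hV hfin I hdd hA Fin.elim0 hpt
    · refine valid_iff fun I => ?_
      simp only [Form.sval]
      have hpt : ∀ d, Form.val I (Form.impl A (Form.lift B)) (Fin.snoc Fin.elim0 d)
          = gv (Form.val I A (Fin.snoc Fin.elim0 d)) (Form.val I B Fin.elim0) := by
        intro d; rw [val_impl_gv, val_lift]
      exact inf_gv_left hV hfin I hid hA (val_Icc hV I B Fin.elim0).2 Fin.elim0 hpt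
    · refine valid_iff fun I => ?_
      simp only [Form.sval]
      have hpt : ∀ d, Form.val I (Form.impl A (Form.lift B)) (Fin.snoc Fin.elim0 d)
          = gv (Form.val I A (Fin.snoc Fin.elim0 d)) (Form.val I B Fin.elim0) := by
        intro d; rw [val_impl_gv, val_lift]
      exact sup_gv_left hV hfin I hid hA (val_Icc hV I B Fin.elim0).2 Fin.elim0 hpt
    · refine valid_iff fun I => ?_
      simp only [Form.sval]
      have hpt : ∀ d, Form.val I (Form.impl (Form.lift B) A) (Fin.snoc Fin.elim0 d)
          = gv (Form.val I B Fin.elim0) (Form.val I A (Fin.snoc Fin.elim0 d)) := by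
        intro d; rw [val_impl_gv, val_lift]
      exact inf_gv_right hV hfin I hid' hA Fin.elim0
        (fun d => (val_Icc hV I A _).2) hpt
    · refine valid_iff fun I => ?_
      simp only [Form.sval]
      have hpt : ∀ d, Form.val I (Form.impl (Form.lift B) A) (Fin.snoc Fin.elim0 d)
          = gv (Form.val I B Fin.elim0) (Form.val I A (Fin.snoc Fin.elim0 d)) := by
        intro d; rw [val_impl_gv, val_lift]
      exact sup_gv_right hV hfin I hid' hA Fin.elim0
        (val_Icc hV I (Form.ex A) Fin.elim0).2 hpt
  · -- prenexation
    intro C hC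
    obtain ⟨P, hp, hd, hv⟩ := prenex_main hV hfin C hC
    exact ⟨P, hp, hd, fun I => hv I Fin.elim0⟩

end GodelPaper
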